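/- Let (Ω, ℱ, (ℱ_t)_{t≥0}, P) be a filtered probability space, let τ : Ω → [0,∞] be a random time, and for s ≥ 0 define 𝒟_s := σ( {τ ≤ u} : 0 ≤ u ≤ s ) and 𝒢_s := ℱ_s ∨ 𝒟_s. Let 0 ≤ s ≤ t, and let Y be an integrable ℱ-measurable random variable. Assume P(τ > s | ℱ_s) > 0 almost surely. Then E[ 1_{{τ > t}} Y | 𝒢_s ] = 1_{{τ > s}} · E[ 1_{{τ > t}} Y | ℱ_s ] / E[ 1_{{τ > s}} | ℱ_s ] almost surely. -/

import Mathlib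

open MeasureTheory
open scoped ENNReal

/-- Pull-out identity in `lintegral` form: for `f` measurable w.r.t. a sub-σ-algebra `m`,
`∫⁻ 1_A · f dP = ∫⁻ (ofReal E[1_A|m]) · f dP`. -/
lemma pullout_lintegral_aux {Ω : Type*} {m : MeasurableSpace Ω} {m0 : MeasurableSpace Ω}
    (P : Measure Ω) [IsProbabilityMeasure P] (hm : m ≤ m0) {A : Set Ω}
    (hA : MeasurableSet[m0] A) {f : Ω → ℝ≥0∞} (hf : Measurable[m] f) :
    ∫⁻ ω, ENNReal.ofReal (A.indicator (fun _ => (1 : ℝ)) ω) * f ω ∂P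
      = ∫⁻ ω, ENNReal.ofReal ((P[A.indicator (fun _ => (1 : ℝ)) | m]) ω) * f ω ∂P := by
  haveI : SigmaFinite (P.trim hm) := inferInstance
  set D := P[A.indicator (fun _ => (1 : ℝ)) | m] with hDdef
  have hind_int : Integrable (A.indicator (fun _ => (1 : ℝ))) P :=
    (integrable_const (1 : ℝ)).indicator hA
  have hind_nonneg : 0 ≤ᵐ[P] A.indicator (fun _ => (1 : ℝ)) :=
    Filter.Eventually.of_forall fun ω => Set.indicator_nonneg (fun _ _ => zero_le_one) ω
  have hD_sm : StronglyMeasurable[m] D := stronglyMeasurable_condExp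
  have hD_nonneg : 0 ≤ᵐ[P] D := condExp_nonneg hind_nonneg
  have hg1 : Measurable[m0] fun ω => ENNReal.ofReal (A.indicator (fun _ => (1 : ℝ)) ω) :=
    (measurable_const.indicator hA).ennreal_ofReal
  have hg2m : Measurable[m] fun ω => ENNReal.ofReal (D ω) :=
    hD_sm.measurable.ennreal_ofReal
  have hg2 : Measurable[m0] fun ω => ENNReal.ofReal (D ω) := hg2m.mono hm le_rfl
  have hfm0 : Measurable[m0] f := hf.mono hm le_rfl
  have key : (P.withDensity fun ω => ENNReal.ofReal (A.indicator (fun _ => (1 : ℝ)) ω)).trim hm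
      = (P.withDensity fun ω => ENNReal.ofReal (D ω)).trim hm := by
    refine @Measure.ext Ω m _ _ fun C hC => ?_
    rw [trim_measurableSet_eq hm hC, trim_measurableSet_eq hm hC,
      withDensity_apply _ (hm C hC), withDensity_apply _ (hm C hC)]
    have h1 : ENNReal.ofReal (∫ ω in C, A.indicator (fun _ => (1 : ℝ)) ω ∂P)
        = ∫⁻ ω in C, ENNReal.ofReal (A.indicator (fun _ => (1 : ℝ)) ω) ∂P :=
      ofReal_integral_eq_lintegral_ofReal hind_int.integrableOn (ae_restrict_of_ae hind_nonneg)
    have h2 : ENNReal.ofReal (∫ ω in C, D ω ∂P) = ∫⁻ ω in C, ENNReal.ofReal (D ω) ∂P :=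
      ofReal_integral_eq_lintegral_ofReal integrable_condExp.integrableOn
        (ae_restrict_of_ae hD_nonneg)
    rw [← h1, ← h2, setIntegral_condExp hm hind_int hC]
  have e1 : ∫⁻ ω, ENNReal.ofReal (A.indicator (fun _ => (1 : ℝ)) ω) * f ω ∂P
      = ∫⁻ ω, f ω ∂((P.withDensity fun ω =>
          ENNReal.ofReal (A.indicator (fun _ => (1 : ℝ)) ω)).trim hm) := by
    rw [lintegral_trim hm hf, lintegral_withDensity_eq_lintegral_mul P hg1 hfm0]
    rfl
  have e2 : ∫⁻ ω, ENNReal.ofReal (D ω) * f ω ∂P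
      = ∫⁻ ω, f ω ∂((P.withDensity fun ω => ENNReal.ofReal (D ω)).trim hm) := by
    rw [lintegral_trim hm hf, lintegral_withDensity_eq_lintegral_mul P hg2 hfm0]
    rfl
  rw [e1, e2, key]



lemma meas_div_helper {Ω : Type*} {m : MeasurableSpace Ω} {N D : Ω → ℝ}
    (hN : Measurable[m] N) (hD : Measurable[m] D) :
    Measurable[m] fun ω => (‖N ω‖₊ : ℝ≥0∞) / ENNReal.ofReal (D ω) :=
  hN.enorm.div hD.ennreal_ofReal

lemma meas_ind_mul_div_helper {Ω : Type*} {m : MeasurableSpace Ω} {F : Set Ω}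
    (hF : MeasurableSet[m] F) {N D : Ω → ℝ} (hN : Measurable[m] N) (hD : Measurable[m] D) :
    Measurable[m] fun ω => F.indicator (fun _ => (1 : ℝ)) ω * N ω / D ω :=
  ((measurable_const.indicator hF).mul hN).div hD

/-- If every generator of `mD` is disjoint from `A`, then every `mF ⊔ mD`-measurable set
agrees on `A` with an `mF`-measurable set. -/
lemma sup_generateFrom_inter_aux {Ω : Type*} {mF : MeasurableSpace Ω}
    {S : Set (Set Ω)} {A : Set Ω} (hS : ∀ C ∈ S, C ∩ A = ∅) :
    ∀ C : Set Ω, MeasurableSet[mF ⊔ MeasurableSpace.generateFrom S] C →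
      ∃ F, MeasurableSet[mF] F ∧ C ∩ A = F ∩ A := by
  let M : MeasurableSpace Ω :=
    { MeasurableSet' := fun C => ∃ F, MeasurableSet[mF] F ∧ C ∩ A = F ∩ A
      measurableSet_empty := ⟨∅, (@MeasurableSet.empty Ω mF), rfl⟩
      measurableSet_compl := by
        rintro C ⟨F, hF, hCF⟩
        refine ⟨Fᶜ, hF.compl, ?_⟩
        ext ω
        have h := Set.ext_iff.mp hCF ω
        simp only [Set.mem_inter_iff, Set.mem_compl_iff] at h ⊢
        tauto
      measurableSet_iUnion := by
        rintro g hg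
        choose F hF hgF using hg
        exact ⟨⋃ i, F i, MeasurableSet.iUnion hF, by
          rw [Set.iUnion_inter, Set.iUnion_inter]; exact Set.iUnion_congr hgF⟩ }
  have hle : mF ⊔ MeasurableSpace.generateFrom S ≤ M := by
    refine sup_le (fun C hC => ⟨C, hC, rfl⟩) ?_
    refine MeasurableSpace.generateFrom_le fun C hCS => ⟨∅, (@MeasurableSet.empty Ω mF), ?_⟩
    rw [hS C hCS, Set.empty_inter]
  exact fun C hC => hle C hC

/-- Lemma 3.3 of the paper (the classical key lemma of reduced-form credit risk):
for the progressively enlarged filtration `𝒢_s = ℱ_s ∨ σ({τ ≤ u} : u ≤ s)` and an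
integrable random variable `Y`,
`E[1_{{τ>t}} Y | 𝒢_s] = 1_{{τ>s}} E[1_{{τ>t}} Y | ℱ_s] / E[1_{{τ>s}} | ℱ_s]` a.s. -/
theorem key_lemma_progressive_enlargement
    {Ω : Type*} {m0 : MeasurableSpace Ω} (P : Measure Ω) [IsProbabilityMeasure P]
    (ℱ : Filtration ℝ m0)
    (τ : Ω → ℝ≥0∞) (hτ_meas : Measurable τ)
    (𝒟 : ℝ → MeasurableSpace Ω)
    (h𝒟 : ∀ s : ℝ, 𝒟 s = MeasurableSpace.generateFrom
      {A | ∃ u : ℝ, 0 ≤ u ∧ u ≤ s ∧ A = {ω | τ ω ≤ ENNReal.ofReal u}})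
    (𝒢 : ℝ → MeasurableSpace Ω) (h𝒢 : ∀ s : ℝ, 𝒢 s = ℱ s ⊔ 𝒟 s)
    (s t : ℝ) (hs : 0 ≤ s) (hst : s ≤ t)
    (Y : Ω → ℝ) (hY_meas : Measurable Y) (hY_int : Integrable Y P)
    (hpos : ∀ᵐ ω ∂P,
      0 < (P[Set.indicator {ω' | ENNReal.ofReal s < τ ω'} (fun _ => (1 : ℝ)) | ℱ s]) ω) :
    P[fun ω => Set.indicator {ω' | ENNReal.ofReal t < τ ω'} (fun _ => (1 : ℝ)) ω * Y ω | 𝒢 s]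
      =ᵐ[P] fun ω =>
        Set.indicator {ω' | ENNReal.ofReal s < τ ω'} (fun _ => (1 : ℝ)) ω *
          (P[fun ω' => Set.indicator {ω'' | ENNReal.ofReal t < τ ω''} (fun _ => (1 : ℝ)) ω' * Y ω'
              | ℱ s]) ω /
          (P[Set.indicator {ω' | ENNReal.ofReal s < τ ω'} (fun _ => (1 : ℝ)) | ℱ s]) ω := by
  classical
  -- notation
  set A : Set Ω := {ω | ENNReal.ofReal s < τ ω} with hAdef
  set B : Set Ω := {ω | ENNReal.ofReal t < τ ω} with hBdef
  have hm : ℱ s ≤ m0 := ℱ.le s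
  have hA : MeasurableSet A := measurableSet_lt measurable_const hτ_meas
  have hB : MeasurableSet B := measurableSet_lt measurable_const hτ_meas
  have hBA : B ⊆ A := fun ω hω =>
    lt_of_le_of_lt (ENNReal.ofReal_le_ofReal hst) hω
  set indA : Ω → ℝ := A.indicator (fun _ => (1 : ℝ)) with hindA
  set indB : Ω → ℝ := B.indicator (fun _ => (1 : ℝ)) with hindB
  set f₀ : Ω → ℝ := fun ω => indB ω * Y ω with hf₀def
  set D : Ω → ℝ := P[indA | ℱ s] with hDdef
  set N : Ω → ℝ := P[f₀ | ℱ s] with hNdef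
  set Z : Ω → ℝ := fun ω => indA ω * N ω / D ω with hZdef
  haveI : SigmaFinite (P.trim hm) := inferInstance
  -- basic facts
  have hind_int : Integrable indA P := (integrable_const (1 : ℝ)).indicator hA
  have hf₀_eq : f₀ = B.indicator Y := by
    funext ω
    by_cases h : ω ∈ B <;>
      simp [hf₀def, hindB, Set.indicator_of_mem, Set.indicator_of_notMem, h]
  have hf₀_int : Integrable f₀ P := by rw [hf₀_eq]; exact hY_int.indicator hB
  have hD_sm : StronglyMeasurable[ℱ s] D := stronglyMeasurable_condExp
  have hN_sm : StronglyMeasurable[ℱ s] N := stronglyMeasurable_condExp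
  have hD_pos : ∀ᵐ ω ∂P, 0 < D ω := hpos
  -- the enlarged σ-algebra
  have hmD : 𝒟 s ≤ m0 := by
    rw [h𝒟]
    refine MeasurableSpace.generateFrom_le ?_
    rintro _ ⟨u, hu0, hus, rfl⟩
    exact hτ_meas measurableSet_Iic
  have hmG : 𝒢 s ≤ m0 := by rw [h𝒢]; exact sup_le hm hmD
  have hFG : ℱ s ≤ 𝒢 s := by rw [h𝒢]; exact le_sup_left
  have hDG : 𝒟 s ≤ 𝒢 s := by rw [h𝒢]; exact le_sup_right
  haveI : SigmaFinite (P.trim hmG) := inferInstance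
  have hA_D : MeasurableSet[𝒟 s] A := by
    have h1 : MeasurableSet[𝒟 s] {ω | τ ω ≤ ENNReal.ofReal s} := by
      rw [h𝒟]
      exact MeasurableSpace.measurableSet_generateFrom ⟨s, hs, le_rfl, rfl⟩
    have h2 := h1.compl
    have : {ω | τ ω ≤ ENNReal.ofReal s}ᶜ = A := by
      ext ω; simp [hAdef, not_le]
    rwa [this] at h2
  have hA_G : MeasurableSet[𝒢 s] A := hDG A hA_D
  -- integrability of Z
  have hZ_meas : Measurable Z :=
    meas_ind_mul_div_helper hA (hN_sm.measurable.mono hm le_rfl)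
      (hD_sm.measurable.mono hm le_rfl)
  have hZ_int : Integrable Z P := by
    set f : Ω → ℝ≥0∞ := fun ω => (‖N ω‖₊ : ℝ≥0∞) / ENNReal.ofReal (D ω) with hfdef
    have hf_m : Measurable[ℱ s] f :=
      meas_div_helper hN_sm.measurable hD_sm.measurable
    have key := pullout_lintegral_aux P hm hA hf_m
    have h1 : ∀ᵐ ω ∂P, (‖Z ω‖₊ : ℝ≥0∞) = ENNReal.ofReal (indA ω) * f ω := by
      filter_upwards [hD_pos] with ω hω
      by_cases hωA : ω ∈ A
      · have hZω : Z ω = N ω / D ω := by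
          simp [hZdef, hindA, Set.indicator_of_mem hωA]
        have hiω : indA ω = 1 := Set.indicator_of_mem hωA _
        have hnn : (‖N ω / D ω‖₊ : ℝ≥0∞) = (‖N ω‖₊ : ℝ≥0∞) / ENNReal.ofReal (D ω) := by
          rw [← enorm_eq_nnnorm, ← enorm_eq_nnnorm, ← ofReal_norm, ← ofReal_norm, norm_div,
            Real.norm_eq_abs (D ω), abs_of_pos hω, ENNReal.ofReal_div_of_pos hω]
        rw [hZω, hiω, ENNReal.ofReal_one, one_mul, hnn]
      · have hiω : indA ω = 0 := Set.indicator_of_notMem hωA _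
        have hZω : Z ω = 0 := by simp [hZdef, hiω]
        simp [hZω, hiω]
    have h2 : ∀ᵐ ω ∂P, ENNReal.ofReal (D ω) * f ω = (‖N ω‖₊ : ℝ≥0∞) := by
      filter_upwards [hD_pos] with ω hω
      have h0 : ENNReal.ofReal (D ω) ≠ 0 := by
        simp [ENNReal.ofReal_pos.mpr hω, (ENNReal.ofReal_pos.mpr hω).ne']
      rw [hfdef, mul_comm, ENNReal.div_mul_cancel h0 ENNReal.ofReal_ne_top]
    have hfin : ∫⁻ ω, (‖Z ω‖₊ : ℝ≥0∞) ∂P < ∞ := by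
      calc ∫⁻ ω, (‖Z ω‖₊ : ℝ≥0∞) ∂P
          = ∫⁻ ω, ENNReal.ofReal (indA ω) * f ω ∂P := lintegral_congr_ae h1
        _ = ∫⁻ ω, ENNReal.ofReal (D ω) * f ω ∂P := key
        _ = ∫⁻ ω, (‖N ω‖₊ : ℝ≥0∞) ∂P := lintegral_congr_ae h2
        _ < ∞ := (integrable_condExp (m := ℱ s) (f := f₀)).2
    exact ⟨hZ_meas.aestronglyMeasurable, hfin⟩
  -- structure of 𝒢 s - measurable sets on A
  have hGM : ∀ C : Set Ω, MeasurableSet[𝒢 s] C →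
      ∃ F, MeasurableSet[ℱ s] F ∧ C ∩ A = F ∩ A := by
    have hS : ∀ C ∈ {A' : Set Ω | ∃ u : ℝ, 0 ≤ u ∧ u ≤ s ∧
        A' = {ω | τ ω ≤ ENNReal.ofReal u}}, C ∩ A = ∅ := by
      rintro _ ⟨u, hu0, hus, rfl⟩
      ext ω
      simp only [Set.mem_inter_iff, Set.mem_empty_iff_false, iff_false,
        Set.mem_setOf_eq, not_and, hAdef]
      intro h1 h2
      exact absurd (h2.trans_le (h1.trans (ENNReal.ofReal_le_ofReal hus))) (lt_irrefl _)
    intro C hC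
    refine sup_generateFrom_inter_aux hS C ?_
    rw [h𝒢, h𝒟] at hC
    exact hC
  -- the set-integral identity
  have hg_eq : ∀ C : Set Ω, MeasurableSet[𝒢 s] C → P C < ∞ →
      ∫ ω in C, Z ω ∂P = ∫ ω in C, f₀ ω ∂P := by
    intro C hC _
    obtain ⟨F, hF, hCA⟩ := hGM C hC
    have hZ_zero : ∀ ω, ω ∉ A → Z ω = 0 := by
      intro ω hωA
      simp [hZdef, hindA, Set.indicator_of_notMem hωA]
    have hf₀_zero : ∀ ω, ω ∉ A → f₀ ω = 0 := by
      intro ω hωA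
      have : ω ∉ B := fun h => hωA (hBA h)
      simp [hf₀def, hindB, Set.indicator_of_notMem this]
    have hswap : ∀ (W : Ω → ℝ), (∀ ω, ω ∉ A → W ω = 0) →
        C.indicator W = F.indicator W := by
      intro W hW
      funext ω
      by_cases hωA : ω ∈ A
      · have h := Set.ext_iff.mp hCA ω
        simp only [Set.mem_inter_iff, hωA, and_true] at h
        by_cases hωC : ω ∈ C
        · rw [Set.indicator_of_mem hωC, Set.indicator_of_mem (h.mp hωC)]
        · rw [Set.indicator_of_notMem hωC, Set.indicator_of_notMem (fun hf => hωC (h.mpr hf))]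
      · by_cases hωC : ω ∈ C <;> by_cases hωF : ω ∈ F <;>
          simp [Set.indicator_apply, hωC, hωF, hW ω hωA]
    -- reduce to F
    have e₁ : ∫ ω in C, Z ω ∂P = ∫ ω in F, Z ω ∂P := by
      rw [← integral_indicator (hmG C hC), ← integral_indicator (hm F hF),
        hswap Z hZ_zero]
    have e₂ : ∫ ω in C, f₀ ω ∂P = ∫ ω in F, f₀ ω ∂P := by
      rw [← integral_indicator (hmG C hC), ← integral_indicator (hm F hF),
        hswap f₀ hf₀_zero]
    rw [e₁, e₂]
    -- pull-out argument on F
    set g : Ω → ℝ := fun ω => F.indicator (fun _ => (1 : ℝ)) ω * N ω / D ω with hgdef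
    have hg_sm : StronglyMeasurable[ℱ s] g :=
      (meas_ind_mul_div_helper hF hN_sm.measurable hD_sm.measurable).stronglyMeasurable
    have hprod : g * indA = F.indicator Z := by
      funext ω
      by_cases hωF : ω ∈ F
      · simp only [Pi.mul_apply, hgdef, Set.indicator_of_mem hωF, hZdef]
        ring
      · simp [hgdef, Set.indicator_of_notMem hωF]
    have hg_int : Integrable (g * indA) P := by
      rw [hprod]; exact hZ_int.indicator (hm F hF)
    have hpull : P[g * indA | ℱ s] =ᵐ[P] g * D :=
      condExp_mul_of_stronglyMeasurable_left hg_sm hg_int hind_int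
    have hgD : ∀ᵐ ω ∂P, (g * D) ω = F.indicator N ω := by
      filter_upwards [hD_pos] with ω hω
      by_cases hωF : ω ∈ F
      · simp only [Pi.mul_apply, hgdef, Set.indicator_of_mem hωF, one_mul,
          Set.indicator_of_mem hωF (f := N)]
        exact div_mul_cancel₀ (N ω) hω.ne'
      · simp [hgdef, Set.indicator_of_notMem hωF]
    calc ∫ ω in F, Z ω ∂P
        = ∫ ω, F.indicator Z ω ∂P := (integral_indicator (hm F hF)).symm
      _ = ∫ ω, (g * indA) ω ∂P := by rw [hprod]
      _ = ∫ ω, (P[g * indA | ℱ s]) ω ∂P := (integral_condExp hm).symm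
      _ = ∫ ω, (g * D) ω ∂P := integral_congr_ae hpull
      _ = ∫ ω, F.indicator N ω ∂P := integral_congr_ae hgD
      _ = ∫ ω in F, N ω ∂P := integral_indicator (hm F hF)
      _ = ∫ ω in F, f₀ ω ∂P := setIntegral_condExp hm hf₀_int hF
  -- Z is 𝒢 s - strongly measurable
  have hZ_sm' : AEStronglyMeasurable[𝒢 s] Z P :=
    StronglyMeasurable.aestronglyMeasurable
      ((meas_ind_mul_div_helper hA_G (hN_sm.measurable.mono hFG le_rfl)
        (hD_sm.measurable.mono hFG le_rfl)).stronglyMeasurable)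
  -- conclude
  exact (ae_eq_condExp_of_forall_setIntegral_eq hmG hf₀_int
    (fun C _ _ => hZ_int.integrableOn) hg_eq hZ_sm').symm
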